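/- For any trace-preserving completely positive map E on B(H) with dim H < ∞ and any subspace H' ⊆ H, the entanglement fidelity of the maximally mixed state on H' satisfies 1 − F_e(π_{H'}, E) ≤ (3/2)(1 − F_p(H', E)), where F_p(H',E) = min over unit vectors φ ∈ H' of ⟨φ|E(|φ⟩⟨φ|)|φ⟩. Consequently, the quantum capacity defined via minimum pure-state fidelity is at most that defined via entanglement fidelity. -/

import Mathlib

open Matrix Complex

/-! Auxiliary machinery: fourth-root-of-unity characters and a discrete
phase-averaging (2-design-like) identity used to compare entanglement fidelity
with minimum pure-state fidelity. -/

noncomputable def chi : ZMod 4 → ℂ := fun k => Complex.I ^ k.val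

lemma chi_zero : chi 0 = 1 := by simp [chi]
lemma chi_one : chi 1 = I := by
  simp [chi, show ((1 : ZMod 4)).val = 1 from rfl]
lemma chi_two : chi 2 = -1 := by
  simp [chi, show ((2 : ZMod 4)).val = 2 from rfl, Complex.I_sq]
lemma chi_three : chi 3 = -I := by
  simp only [chi, show ((3 : ZMod 4)).val = 3 from rfl]
  rw [pow_succ, Complex.I_sq]; ring

lemma zmod4_cases : ∀ a : ZMod 4, a = 0 ∨ a = 1 ∨ a = 2 ∨ a = 3 := by decide

lemma chi_add (a b : ZMod 4) : chi (a + b) = chi a * chi b := by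
  simp only [chi]
  rw [ZMod.val_add, ← pow_add]
  conv_rhs => rw [← Nat.div_add_mod (a.val + b.val) 4]
  rw [pow_add, pow_mul, Complex.I_pow_four, one_pow, one_mul]

lemma chi_neg (a : ZMod 4) : chi (-a) = (starRingEnd ℂ) (chi a) := by
  rcases zmod4_cases a with h | h | h | h <;> subst h
  · simp [chi_zero]
  · rw [show -(1 : ZMod 4) = 3 by decide, chi_three, chi_one]; simp
  · rw [show -(2 : ZMod 4) = 2 by decide, chi_two]; simp
  · rw [show -(3 : ZMod 4) = 1 by decide, chi_one, chi_three]; simp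

lemma chi_unit (a : ZMod 4) : (starRingEnd ℂ) (chi a) * chi a = 1 := by
  rw [← chi_neg, ← chi_add, neg_add_cancel, chi_zero]

lemma zmod4_sum_expand (f : ZMod 4 → ℂ) :
    ∑ x : ZMod 4, f x = f 0 + f 1 + f 2 + f 3 := by
  have huniv : (Finset.univ : Finset (ZMod 4)) = {0,1,2,3} := by decide
  rw [huniv, Finset.sum_insert (by decide), Finset.sum_insert (by decide),
    Finset.sum_insert (by decide), Finset.sum_singleton]
  ring

lemma chi_orth (n : ZMod 4) : ∑ x : ZMod 4, chi (n * x) = if n = 0 then 4 else 0 := by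
  rcases zmod4_cases n with h | h | h | h <;> subst h <;>
      rw [zmod4_sum_expand]
  · rw [if_pos rfl]
    norm_num [show (0:ZMod 4)*1 = 0 by decide, show (0:ZMod 4)*2 = 0 by decide,
      show (0:ZMod 4)*3 = 0 by decide, chi_zero]
  · rw [if_neg (by decide), show (1:ZMod 4)*0 = 0 by decide, show (1:ZMod 4)*1 = 1 by decide,
      show (1:ZMod 4)*2 = 2 by decide, show (1:ZMod 4)*3 = 3 by decide,
      chi_zero, chi_one, chi_two, chi_three]; ring
  · rw [if_neg (by decide), show (2:ZMod 4)*0 = 0 by decide, show (2:ZMod 4)*1 = 2 by decide,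
      show (2:ZMod 4)*2 = 0 by decide, show (2:ZMod 4)*3 = 2 by decide,
      chi_zero, chi_two]; ring
  · rw [if_neg (by decide), show (3:ZMod 4)*0 = 0 by decide, show (3:ZMod 4)*1 = 3 by decide,
      show (3:ZMod 4)*2 = 2 by decide, show (3:ZMod 4)*3 = 1 by decide,
      chi_zero, chi_one, chi_two, chi_three]; ring

lemma chi_finsum {α : Type*} (s : Finset α) (f : α → ZMod 4) :
    chi (∑ j ∈ s, f j) = ∏ j ∈ s, chi (f j) := by
  classical
  induction s using Finset.cons_induction with
  | empty => simpa using chi_zero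
  | cons a s ha ih => rw [Finset.sum_cons, Finset.prod_cons, chi_add, ih]

lemma orth_prod {D : ℕ} (n : Fin D → ZMod 4) :
    ∑ ω : Fin D → ZMod 4, ∏ j, chi (n j * ω j)
      = if (∀ j, n j = 0) then (4:ℂ)^D else 0 := by
  classical
  have h1 : (∏ j : Fin D, ∑ x : ZMod 4, chi (n j * x))
      = ∑ ω : Fin D → ZMod 4, ∏ j, chi (n j * ω j) := by
    rw [Finset.prod_univ_sum]
    rw [Fintype.piFinset_univ]
  rw [← h1]
  simp_rw [chi_orth]
  by_cases h : ∀ j, n j = 0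
  · rw [if_pos h]
    rw [Finset.prod_congr rfl (fun j _ => if_pos (h j)), Finset.prod_const,
      Finset.card_univ, Fintype.card_fin]
  · rw [if_neg h]
    push_neg at h
    obtain ⟨j, hj⟩ := h
    exact Finset.prod_eq_zero (Finset.mem_univ j) (if_neg hj)

def nfun {D : ℕ} (u v u' v' : Fin D) : Fin D → ZMod 4 := fun j =>
  (if v = j then 1 else 0) + (if u' = j then 1 else 0)
    - (if u = j then 1 else 0) - (if v' = j then 1 else 0)

lemma char_term {D : ℕ} (u v u' v' : Fin D) (ω : Fin D → ZMod 4) :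
    (starRingEnd ℂ) (chi (ω u)) * chi (ω v) * chi (ω u') * (starRingEnd ℂ) (chi (ω v'))
      = ∏ j, chi (nfun u v u' v' j * ω j) := by
  classical
  rw [← chi_finsum]
  have : ∑ j, nfun u v u' v' j * ω j = ω v + ω u' - ω u - ω v' := by
    simp only [nfun, add_mul, sub_mul, ite_mul, one_mul, zero_mul]
    rw [Finset.sum_sub_distrib, Finset.sum_sub_distrib, Finset.sum_add_distrib]
    simp [Finset.sum_ite_eq]
  rw [this, sub_eq_add_neg, sub_eq_add_neg, chi_add, chi_add, chi_add, chi_neg, chi_neg]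
  ring

lemma nfun_zero_iff {D : ℕ} (u v u' v' : Fin D) :
    (∀ j, nfun u v u' v' j = 0) ↔ ((u = v ∧ u' = v') ∨ (u = u' ∧ v = v')) := by
  constructor
  · intro h
    have hu := h u; have hv := h v; have hu' := h u'; have hv' := h v'
    simp only [nfun] at hu hv hu' hv'
    rcases eq_or_ne u v with h1|h1 <;> rcases eq_or_ne u' v' with h2|h2 <;>
      rcases eq_or_ne u u' with h3|h3 <;> rcases eq_or_ne v v' with h4|h4 <;>
      rcases eq_or_ne u v' with h5|h5 <;> rcases eq_or_ne v u' with h6|h6 <;>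
      simp_all <;> tauto
  · rintro (⟨h1,h2⟩|⟨h1,h2⟩) j <;> subst h1 <;> subst h2 <;> simp only [nfun] <;> ring

lemma ite_or_split {P Q : Prop} [Decidable P] [Decidable Q] (x : ℂ) :
    (if P ∨ Q then x else 0)
      = (if P then x else 0) + (if Q then x else 0) - (if P ∧ Q then x else 0) := by
  by_cases hP : P <;> by_cases hQ : Q <;> simp [hP, hQ]

lemma expand_sq {D : ℕ} (B : Fin D → Fin D → ℂ) :
    ∑ ω : Fin D → ZMod 4,
      ((∑ u, ∑ v, (starRingEnd ℂ) (chi (ω u)) * chi (ω v) * B u v) *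
        (starRingEnd ℂ) (∑ u, ∑ v, (starRingEnd ℂ) (chi (ω u)) * chi (ω v) * B u v))
    = (4:ℂ)^D * ((∑ u, B u u) * (starRingEnd ℂ) (∑ u, B u u)
        + ∑ u, ∑ v, B u v * (starRingEnd ℂ) (B u v)
        - ∑ u, B u u * (starRingEnd ℂ) (B u u)) := by
  classical
  have flat : ∀ (C : Fin D → Fin D → ℂ), (∑ u, ∑ v, C u v) = ∑ p : Fin D × Fin D, C p.1 p.2 :=
    fun C => (Fintype.sum_prod_type (f := fun p => C p.1 p.2)).symm
  have step1 : ∀ ω : Fin D → ZMod 4,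
      (∑ u, ∑ v, (starRingEnd ℂ) (chi (ω u)) * chi (ω v) * B u v) *
        (starRingEnd ℂ) (∑ u, ∑ v, (starRingEnd ℂ) (chi (ω u)) * chi (ω v) * B u v)
      = ∑ p : Fin D × Fin D, ∑ q : Fin D × Fin D,
          (∏ j, chi (nfun p.1 p.2 q.1 q.2 j * ω j)) * (B p.1 p.2 * (starRingEnd ℂ) (B q.1 q.2)) := by
    intro ω
    rw [flat, map_sum, Finset.sum_mul_sum]
    refine Finset.sum_congr rfl fun p _ => Finset.sum_congr rfl fun q _ => ?_
    simp only [_root_.map_mul, Complex.conj_conj]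
    rw [← char_term p.1 p.2 q.1 q.2 ω]
    ring
  simp_rw [step1]
  rw [Finset.sum_comm]
  have step2 : ∀ p q : Fin D × Fin D,
      ∑ ω : Fin D → ZMod 4, (∏ j, chi (nfun p.1 p.2 q.1 q.2 j * ω j)) * (B p.1 p.2 * (starRingEnd ℂ) (B q.1 q.2))
      = (if (p.1 = p.2 ∧ q.1 = q.2) ∨ (p.1 = q.1 ∧ p.2 = q.2) then (4:ℂ)^D else 0)
          * (B p.1 p.2 * (starRingEnd ℂ) (B q.1 q.2)) := by
    intro p q
    rw [← Finset.sum_mul, orth_prod]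
    simp only [nfun_zero_iff]
  have swap2 : ∀ p : Fin D × Fin D,
      (∑ ω : Fin D → ZMod 4, ∑ q : Fin D × Fin D,
        (∏ j, chi (nfun p.1 p.2 q.1 q.2 j * ω j)) * (B p.1 p.2 * (starRingEnd ℂ) (B q.1 q.2)))
      = ∑ q : Fin D × Fin D, ∑ ω : Fin D → ZMod 4,
        (∏ j, chi (nfun p.1 p.2 q.1 q.2 j * ω j)) * (B p.1 p.2 * (starRingEnd ℂ) (B q.1 q.2)) :=
    fun p => Finset.sum_comm
  simp_rw [swap2, step2, ite_or_split, sub_mul, add_mul, ite_mul, zero_mul]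
  rw [Finset.sum_congr rfl (fun (p : Fin D × Fin D) (_ : p ∈ Finset.univ) => by
      rw [Finset.sum_sub_distrib, Finset.sum_add_distrib]),
    Finset.sum_sub_distrib, Finset.sum_add_distrib]
  have diag : ∀ (f : Fin D → Fin D → ℂ),
      (∑ p : Fin D × Fin D, (if p.1 = p.2 then f p.1 p.2 else 0)) = ∑ u, f u u := by
    intro f
    rw [← flat (fun u v => if u = v then f u v else 0)]
    simp
  have S1 : (∑ p : Fin D × Fin D, ∑ q : Fin D × Fin D,
      (if p.1 = p.2 ∧ q.1 = q.2 then (4:ℂ)^D * (B p.1 p.2 * (starRingEnd ℂ) (B q.1 q.2)) else 0))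
      = (4:ℂ)^D * ((∑ u, B u u) * (starRingEnd ℂ) (∑ u, B u u)) := by
    have h : ∀ p q : Fin D × Fin D,
        (if p.1 = p.2 ∧ q.1 = q.2 then (4:ℂ)^D * (B p.1 p.2 * (starRingEnd ℂ) (B q.1 q.2)) else 0)
        = (if p.1 = p.2 then B p.1 p.2 else 0) *
            ((4:ℂ)^D * (if q.1 = q.2 then (starRingEnd ℂ) (B q.1 q.2) else 0)) := by
      intro p q
      by_cases h1 : p.1 = p.2 <;> by_cases h2 : q.1 = q.2 <;> simp [h1, h2] <;> ring
    simp_rw [h, ← Finset.mul_sum, ← Finset.sum_mul, diag]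
    rw [map_sum, diag (fun u v => (starRingEnd ℂ) (B u v))]
    ring
  have S2 : (∑ p : Fin D × Fin D, ∑ q : Fin D × Fin D,
      (if p.1 = q.1 ∧ p.2 = q.2 then (4:ℂ)^D * (B p.1 p.2 * (starRingEnd ℂ) (B q.1 q.2)) else 0))
      = (4:ℂ)^D * (∑ u, ∑ v, B u v * (starRingEnd ℂ) (B u v)) := by
    have h : ∀ p q : Fin D × Fin D, (p.1 = q.1 ∧ p.2 = q.2) ↔ p = q := fun p q => (Prod.ext_iff).symm
    simp_rw [h]
    have h2 : ∀ p : Fin D × Fin D, (∑ q : Fin D × Fin D,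
        (if p = q then (4:ℂ)^D * (B p.1 p.2 * (starRingEnd ℂ) (B q.1 q.2)) else 0))
        = (4:ℂ)^D * (B p.1 p.2 * (starRingEnd ℂ) (B p.1 p.2)) := by
      intro p
      rw [Finset.sum_eq_single p (fun q _ hq => by rw [if_neg (by exact fun hh => hq hh.symm)])
        (fun h => absurd (Finset.mem_univ p) h)]
      rw [if_pos rfl]
    simp_rw [h2, ← Finset.mul_sum]
    rw [flat (fun u v => B u v * (starRingEnd ℂ) (B u v))]
  have S3 : (∑ p : Fin D × Fin D, ∑ q : Fin D × Fin D,
      (if (p.1 = p.2 ∧ q.1 = q.2) ∧ p.1 = q.1 ∧ p.2 = q.2 then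
        (4:ℂ)^D * (B p.1 p.2 * (starRingEnd ℂ) (B q.1 q.2)) else 0))
      = (4:ℂ)^D * (∑ u, B u u * (starRingEnd ℂ) (B u u)) := by
    have h : ∀ p q : Fin D × Fin D,
        ((p.1 = p.2 ∧ q.1 = q.2) ∧ p.1 = q.1 ∧ p.2 = q.2) ↔ (p.1 = p.2 ∧ p = q) := by
      intro p q
      rw [Prod.ext_iff]
      constructor
      · rintro ⟨⟨h1, h2⟩, h3, h4⟩; exact ⟨h1, h3, h4⟩
      · rintro ⟨h1, h3, h4⟩; exact ⟨⟨h1, by rw [← h3, ← h4]; exact h1⟩, h3, h4⟩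
    simp_rw [h]
    have h2 : ∀ p : Fin D × Fin D, (∑ q : Fin D × Fin D,
        (if p.1 = p.2 ∧ p = q then (4:ℂ)^D * (B p.1 p.2 * (starRingEnd ℂ) (B q.1 q.2)) else 0))
        = (if p.1 = p.2 then (4:ℂ)^D * (B p.1 p.2 * (starRingEnd ℂ) (B p.1 p.2)) else 0) := by
      intro p
      by_cases h1 : p.1 = p.2
      · rw [Finset.sum_eq_single p (fun q _ hq => by
            rw [if_neg (by exact fun hh => hq hh.2.symm)])
          (fun h => absurd (Finset.mem_univ p) h)]
        rw [if_pos ⟨h1, rfl⟩, if_pos h1]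
      · simp [h1]
    simp_rw [h2]
    rw [diag (fun u v => (4:ℂ)^D * (B u v * (starRingEnd ℂ) (B u v))), ← Finset.mul_sum]
  rw [S1, S2, S3]
  ring

lemma expand_sq_real {D : ℕ} (B : Fin D → Fin D → ℂ) :
    ∑ ω : Fin D → ZMod 4,
      Complex.normSq (∑ u, ∑ v, (starRingEnd ℂ) (chi (ω u)) * chi (ω v) * B u v)
    = (4:ℝ)^D * (Complex.normSq (∑ u, B u u)
        + ∑ u, ∑ v, Complex.normSq (B u v)
        - ∑ u, Complex.normSq (B u u)) := by
  have h := expand_sq B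
  simp_rw [Complex.mul_conj] at h
  exact_mod_cast h

section DotLemmas

variable {ι : Type} [Fintype ι] {D : ℕ}

lemma star_dot_self (w : ι → ℂ) :
    star w ⬝ᵥ w = ((∑ j, Complex.normSq (w j) : ℝ) : ℂ) := by
  simp [dotProduct, Complex.normSq_eq_conj_mul_self]

lemma dot_left_expand (c : Fin D → ℂ) (e : Fin D → ι → ℂ) (w : ι → ℂ) :
    star (∑ u, c u • e u) ⬝ᵥ w = ∑ u, (starRingEnd ℂ) (c u) * (star (e u) ⬝ᵥ w) := by
  simp only [dotProduct, star_sum, Finset.sum_apply, Pi.star_apply, Pi.smul_apply,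
    smul_eq_mul, star_mul', Finset.sum_mul, Finset.mul_sum]
  rw [Finset.sum_comm]
  exact Finset.sum_congr rfl fun u _ => Finset.sum_congr rfl fun i _ => by
    simp [RCLike.star_def]; ring

lemma mulVec_sum_smul (M : Matrix ι ι ℂ) (d : Fin D → ℂ) (e : Fin D → ι → ℂ) :
    M *ᵥ (∑ v, d v • e v) = ∑ v, d v • (M *ᵥ e v) := by
  rw [show (M *ᵥ ∑ v, d v • e v) = M.mulVecLin (∑ v, d v • e v) from rfl, map_sum]
  simp [Matrix.mulVecLin_apply]

lemma dot_right_expand (d : Fin D → ℂ) (e : Fin D → ι → ℂ) (w : ι → ℂ) :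
    w ⬝ᵥ (∑ v, d v • e v) = ∑ v, d v * (w ⬝ᵥ e v) := by
  simp only [dotProduct, Finset.sum_apply, Pi.smul_apply, smul_eq_mul, Finset.mul_sum]
  rw [Finset.sum_comm]
  exact Finset.sum_congr rfl fun u _ => Finset.sum_congr rfl fun i _ => by ring

lemma dot_bilin (M : Matrix ι ι ℂ) (c d : Fin D → ℂ) (e : Fin D → ι → ℂ) :
    star (∑ u, c u • e u) ⬝ᵥ M *ᵥ (∑ v, d v • e v)
      = ∑ u, ∑ v, (starRingEnd ℂ) (c u) * d v * (star (e u) ⬝ᵥ M *ᵥ e v) := by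
  rw [mulVec_sum_smul, dot_left_expand]
  refine Finset.sum_congr rfl fun u _ => ?_
  rw [dot_right_expand, Finset.mul_sum]
  exact Finset.sum_congr rfl fun v _ => by ring

lemma normSq_nonneg_sum (w : ι → ℂ) : 0 ≤ ∑ j, Complex.normSq (w j) :=
  Finset.sum_nonneg fun _ _ => Complex.normSq_nonneg _

lemma bessel (e : Fin D → ι → ℂ)
    (he : ∀ u v, star (e u) ⬝ᵥ e v = if u = v then 1 else 0) (w : ι → ℂ) :
    ∑ u, Complex.normSq (star (e u) ⬝ᵥ w) ≤ ∑ j, Complex.normSq (w j) := by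
  classical
  set c : Fin D → ℂ := fun u => star (e u) ⬝ᵥ w with hc
  set w' : ι → ℂ := w - ∑ u, c u • e u with hw'
  have h1 : star (∑ u, c u • e u) ⬝ᵥ w = ((∑ u, Complex.normSq (c u) : ℝ) : ℂ) := by
    rw [dot_left_expand]
    push_cast
    exact Finset.sum_congr rfl fun u _ => by
      rw [← Complex.normSq_eq_conj_mul_self]
  have h2 : star w ⬝ᵥ (∑ u, c u • e u) = ((∑ u, Complex.normSq (c u) : ℝ) : ℂ) := by
    rw [dot_right_expand]
    push_cast
    refine Finset.sum_congr rfl fun u _ => ?_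
    have : star w ⬝ᵥ e u = star (c u) := by
      rw [Matrix.star_dotProduct]
    rw [this, RCLike.star_def, Complex.mul_conj]
  have h3 : star (∑ u, c u • e u) ⬝ᵥ (∑ u, c u • e u)
      = ((∑ u, Complex.normSq (c u) : ℝ) : ℂ) := by
    rw [dot_left_expand]
    push_cast
    refine Finset.sum_congr rfl fun u _ => ?_
    rw [dot_right_expand]
    rw [Finset.sum_eq_single u (fun v _ hv => by rw [he u v, if_neg (Ne.symm hv)]; ring)
      (fun h => absurd (Finset.mem_univ u) h)]
    rw [he u u, if_pos rfl, mul_one, ← Complex.normSq_eq_conj_mul_self]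
  have key : star w' ⬝ᵥ w' = star w ⬝ᵥ w - ((∑ u, Complex.normSq (c u) : ℝ) : ℂ) := by
    rw [hw', star_sub, sub_dotProduct, dotProduct_sub, dotProduct_sub,
      h1, h2, h3]
    ring
  have hkey : (∑ j, Complex.normSq (w' j))
      = (∑ j, Complex.normSq (w j)) - ∑ u, Complex.normSq (c u) := by
    have hthis := key
    rw [star_dot_self, star_dot_self] at hthis
    exact_mod_cast (by exact_mod_cast hthis :
      ((∑ j, Complex.normSq (w' j) : ℝ) : ℂ)
        = ((∑ j, Complex.normSq (w j)) - ∑ u, Complex.normSq (c u) : ℝ))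
  have h0 := normSq_nonneg_sum w'
  rw [hkey] at h0
  linarith

lemma dot_sum {κ : Type} [Fintype κ] (w : ι → ℂ) (f : κ → ι → ℂ) :
    w ⬝ᵥ (∑ m, f m) = ∑ m, w ⬝ᵥ f m := by
  simp only [dotProduct, Finset.sum_apply, Finset.mul_sum]
  rw [Finset.sum_comm]

lemma sum_mulVec {κ : Type} [Fintype κ] (M : κ → Matrix ι ι ℂ) (x : ι → ℂ) :
    (∑ m, M m) *ᵥ x = ∑ m, (M m) *ᵥ x := by
  funext i
  simp only [Matrix.mulVec, dotProduct, Finset.sum_apply, Matrix.sum_apply, Finset.sum_mul]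
  rw [Finset.sum_comm]

end DotLemmas

/-- 1 − F_e(π_{H'}, E) ≤ (3/2)(1 − F_p(H', E)) for any TPCP map E on a
finite-dimensional space and any subspace H' (given by an orthonormal basis e).
E is given by Kraus operators {A_m} with Σ A_m†A_m = 1; the entanglement fidelity of
the maximally mixed state π_{H'} is Σ_m |Tr(π_{H'}A_m)|² = Σ_m |D⁻¹Σ_u⟨e_u|A_m|e_u⟩|²,
the pure-state fidelity of φ is ⟨φ|E(|φ⟩⟨φ|)|φ⟩ = Σ_m |⟨φ|A_m|φ⟩|², and F_p is its
infimum over unit vectors of H'. -/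
theorem stmt18 (ι : Type) [Fintype ι] [DecidableEq ι]
    (κ : Type) [Fintype κ]
    (A : κ → Matrix ι ι ℂ) (hTP : ∑ m, (A m)ᴴ * A m = 1)
    (D : ℕ) (hD : 0 < D)
    (e : Fin D → (ι → ℂ))
    (he : ∀ u v, star (e u) ⬝ᵥ e v = if u = v then 1 else 0) :
    1 - ∑ m, Complex.normSq ((D : ℂ)⁻¹ * ∑ u, star (e u) ⬝ᵥ (A m).mulVec (e u)) ≤
      (3 / 2) * (1 - sInf {r : ℝ | ∃ φ : ι → ℂ,
        (∑ j, Complex.normSq (φ j)) = 1 ∧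
        φ ∈ Submodule.span ℂ (Set.range e) ∧
        r = ∑ m, Complex.normSq (star φ ⬝ᵥ (A m).mulVec φ)}) := by
  classical
  set S : Set ℝ := {r : ℝ | ∃ φ : ι → ℂ,
        (∑ j, Complex.normSq (φ j)) = 1 ∧
        φ ∈ Submodule.span ℂ (Set.range e) ∧
        r = ∑ m, Complex.normSq (star φ ⬝ᵥ (A m).mulVec φ)} with hSdef
  set s : ℝ := sInf S with hs
  have hbdd : BddBelow S := by
    refine ⟨0, ?_⟩
    rintro r ⟨φ, -, -, rfl⟩
    exact Finset.sum_nonneg fun m _ => Complex.normSq_nonneg _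
  -- e u is a unit vector of the subspace
  have he_norm : ∀ u, (∑ j, Complex.normSq (e u j)) = 1 := by
    intro u
    have h := he u u
    rw [if_pos rfl, star_dot_self] at h
    exact_mod_cast h
  have hmem_e : ∀ u, (∑ m, Complex.normSq (star (e u) ⬝ᵥ (A m).mulVec (e u))) ∈ S :=
    fun u => ⟨e u, he_norm u, Submodule.subset_span ⟨u, rfl⟩, rfl⟩
  have hse : ∀ u, s ≤ ∑ m, Complex.normSq (star (e u) ⬝ᵥ (A m).mulVec (e u)) :=
    fun u => csInf_le hbdd (hmem_e u)
  -- trace preservation, vector form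
  have hTPreal : ∀ x : ι → ℂ,
      ∑ m, ∑ j, Complex.normSq (((A m).mulVec x) j) = ∑ j, Complex.normSq (x j) := by
    intro x
    have hv : ∀ m : κ, star ((A m).mulVec x) ⬝ᵥ ((A m).mulVec x)
        = star x ⬝ᵥ (((A m)ᴴ * (A m)) *ᵥ x) := by
      intro m
      rw [Matrix.star_mulVec, Matrix.dotProduct_mulVec, Matrix.dotProduct_mulVec,
        Matrix.vecMul_vecMul]
    have hsum : ∑ m, star ((A m).mulVec x) ⬝ᵥ ((A m).mulVec x) = star x ⬝ᵥ x := by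
      simp_rw [hv]
      rw [← dot_sum, ← _root_.sum_mulVec, hTP, Matrix.one_mulVec]
    simp_rw [star_dot_self] at hsum
    exact_mod_cast hsum
  -- Bessel bound: column sums of |B| are at most 1
  have hR1 : ∀ v, ∑ m, ∑ u, Complex.normSq (star (e u) ⬝ᵥ (A m).mulVec (e v)) ≤ 1 := by
    intro v
    calc ∑ m, ∑ u, Complex.normSq (star (e u) ⬝ᵥ (A m).mulVec (e v))
        ≤ ∑ m, ∑ j, Complex.normSq (((A m).mulVec (e v)) j) :=
          Finset.sum_le_sum fun m _ => bessel e he _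
      _ = ∑ j, Complex.normSq (e v j) := hTPreal (e v)
      _ = 1 := he_norm v
  have hfe_le1 : ∀ u, ∑ m, Complex.normSq (star (e u) ⬝ᵥ (A m).mulVec (e u)) ≤ 1 := by
    intro u
    refine le_trans (Finset.sum_le_sum fun m _ => ?_) (hR1 u)
    exact Finset.single_le_sum
      (f := fun u' => Complex.normSq (star (e u') ⬝ᵥ (A m).mulVec (e u)))
      (fun _ _ => Complex.normSq_nonneg _) (Finset.mem_univ u)
  have hs1 : s ≤ 1 := le_trans (hse ⟨0, hD⟩) (hfe_le1 ⟨0, hD⟩)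
  have hDR : (0:ℝ) < (D:ℝ) := by exact_mod_cast hD
  -- the random-phase states
  have hmem_ω : ∀ ω : Fin D → ZMod 4,
      ((D:ℝ) * (D:ℝ))⁻¹ * (∑ m, Complex.normSq (∑ u, ∑ v,
        (starRingEnd ℂ) (chi (ω u)) * chi (ω v) * (star (e u) ⬝ᵥ (A m).mulVec (e v)))) ∈ S := by
    intro ω
    set c : ℂ := (((Real.sqrt D)⁻¹ : ℝ) : ℂ) with hc
    set ψ : ι → ℂ := ∑ u, chi (ω u) • e u with hψ
    have hcc : (starRingEnd ℂ) c * c = (((D:ℝ)⁻¹ : ℝ) : ℂ) := by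
      rw [hc, Complex.conj_ofReal, ← Complex.ofReal_mul, ← mul_inv,
        Real.mul_self_sqrt (le_of_lt hDR)]
    have hψψ : star ψ ⬝ᵥ ψ = (D:ℂ) := by
      rw [hψ, dot_left_expand]
      have : ∀ u : Fin D, (starRingEnd ℂ) (chi (ω u)) * (star (e u) ⬝ᵥ ∑ v, chi (ω v) • e v)
          = 1 := by
        intro u
        rw [dot_right_expand]
        rw [Finset.sum_eq_single u (fun v _ hv => by rw [he u v, if_neg (Ne.symm hv)]; ring)
          (fun h => absurd (Finset.mem_univ u) h)]
        rw [he u u, if_pos rfl, mul_one, chi_unit]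
      rw [Finset.sum_congr rfl fun u _ => this u]
      simp
    have hsmul : ∀ M : Matrix ι ι ℂ,
        star (c • ψ) ⬝ᵥ (M *ᵥ (c • ψ)) = ((starRingEnd ℂ) c * c) * (star ψ ⬝ᵥ (M *ᵥ ψ)) := by
      intro M
      rw [star_smul, Matrix.mulVec_smul, smul_dotProduct, dotProduct_smul]
      simp only [smul_eq_mul, RCLike.star_def]
      ring
    refine ⟨c • ψ, ?_, ?_, ?_⟩
    · have h1 : star (c • ψ) ⬝ᵥ (c • ψ) = 1 := by
        rw [star_smul, smul_dotProduct, dotProduct_smul, hψψ]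
        simp only [smul_eq_mul, RCLike.star_def]
        rw [← mul_assoc, hcc]
        rw [← Complex.ofReal_natCast, ← Complex.ofReal_mul,
          inv_mul_cancel₀ (ne_of_gt hDR), Complex.ofReal_one]
      rw [star_dot_self] at h1
      exact_mod_cast h1
    · exact Submodule.smul_mem _ c (Submodule.sum_mem _ fun u _ =>
        Submodule.smul_mem _ _ (Submodule.subset_span ⟨u, rfl⟩))
    · have hval : ∀ m : κ, star (c • ψ) ⬝ᵥ ((A m).mulVec (c • ψ))
          = (((D:ℝ)⁻¹ : ℝ) : ℂ) * (∑ u, ∑ v,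
              (starRingEnd ℂ) (chi (ω u)) * chi (ω v) * (star (e u) ⬝ᵥ (A m).mulVec (e v))) := by
        intro m
        rw [hsmul (A m), hcc, hψ, dot_bilin]
      rw [Finset.sum_congr rfl fun m _ => congrArg Complex.normSq (hval m)]
      rw [Finset.sum_congr rfl fun m (_ : m ∈ Finset.univ) => Complex.normSq_mul _ _,
        ← Finset.mul_sum]
      rw [Complex.normSq_ofReal, ← mul_inv]
  have hsω : ∀ ω : Fin D → ZMod 4,
      (D:ℝ) * (D:ℝ) * s ≤ ∑ m, Complex.normSq (∑ u, ∑ v,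
        (starRingEnd ℂ) (chi (ω u)) * chi (ω v) * (star (e u) ⬝ᵥ (A m).mulVec (e v))) := by
    intro ω
    have h := csInf_le hbdd (hmem_ω ω)
    have hDD : (0:ℝ) < (D:ℝ) * (D:ℝ) := by positivity
    have := mul_le_mul_of_nonneg_left h (le_of_lt hDD)
    calc (D:ℝ) * (D:ℝ) * s ≤ (D:ℝ) * (D:ℝ) * (((D:ℝ) * (D:ℝ))⁻¹ * _) := this
      _ = _ := by field_simp
  -- abbreviations
  set Fe' : ℝ := ∑ m, Complex.normSq (∑ u, star (e u) ⬝ᵥ (A m).mulVec (e u)) with hFe'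
  set R : ℝ := ∑ m, ∑ u, ∑ v, Complex.normSq (star (e u) ⬝ᵥ (A m).mulVec (e v)) with hr
  set T : ℝ := ∑ m, ∑ u, Complex.normSq (star (e u) ⬝ᵥ (A m).mulVec (e u)) with ht
  -- the averaging identity
  have hiden : ∑ ω : Fin D → ZMod 4, ∑ m, Complex.normSq (∑ u, ∑ v,
      (starRingEnd ℂ) (chi (ω u)) * chi (ω v) * (star (e u) ⬝ᵥ (A m).mulVec (e v)))
      = (4:ℝ)^D * (Fe' + R - T) := by
    rw [Finset.sum_comm]
    rw [Finset.sum_congr rfl fun m (_ : m ∈ Finset.univ) =>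
      expand_sq_real (fun u v => star (e u) ⬝ᵥ (A m).mulVec (e v))]
    rw [← Finset.mul_sum, Finset.sum_sub_distrib, Finset.sum_add_distrib]
  -- lower bound on the average
  have hlow : (4:ℝ)^D * ((D:ℝ) * (D:ℝ) * s) ≤ (4:ℝ)^D * (Fe' + R - T) := by
    rw [← hiden]
    calc (4:ℝ)^D * ((D:ℝ) * (D:ℝ) * s)
        = ∑ _ω : Fin D → ZMod 4, (D:ℝ) * (D:ℝ) * s := by
          rw [Finset.sum_const, Finset.card_univ, nsmul_eq_mul]
          congr 1
          rw [Fintype.card_fun, ZMod.card, Fintype.card_fin]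
          push_cast
          ring
      _ ≤ _ := Finset.sum_le_sum fun ω _ => hsω ω
  have hkey : (D:ℝ) * (D:ℝ) * s ≤ Fe' + R - T :=
    le_of_mul_le_mul_left hlow (by positivity)
  -- R ≤ D
  have hRD : R ≤ (D:ℝ) := by
    have hswap : R = ∑ v, ∑ m, ∑ u, Complex.normSq (star (e u) ⬝ᵥ (A m).mulVec (e v)) := by
      rw [hr, Finset.sum_congr rfl fun m (_ : m ∈ Finset.univ) =>
        (Finset.sum_comm : (∑ u, ∑ v, Complex.normSq (star (e u) ⬝ᵥ (A m).mulVec (e v)))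
          = ∑ v, ∑ u, Complex.normSq (star (e u) ⬝ᵥ (A m).mulVec (e v)))]
      rw [Finset.sum_comm]
    rw [hswap]
    calc ∑ v, ∑ m, ∑ u, Complex.normSq (star (e u) ⬝ᵥ (A m).mulVec (e v))
        ≤ ∑ _v : Fin D, (1:ℝ) := Finset.sum_le_sum fun v _ => hR1 v
      _ = (D:ℝ) := by simp
  -- T ≥ D s
  have hTD : (D:ℝ) * s ≤ T := by
    have hswap : T = ∑ u, ∑ m, Complex.normSq (star (e u) ⬝ᵥ (A m).mulVec (e u)) := by
      rw [ht, Finset.sum_comm]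
    rw [hswap]
    calc (D:ℝ) * s = ∑ _u : Fin D, s := by
          rw [Finset.sum_const, Finset.card_univ, Fintype.card_fin, nsmul_eq_mul]
      _ ≤ _ := Finset.sum_le_sum fun u _ => hse u
  -- rewrite the goal
  have hgoal : ∑ m, Complex.normSq ((D : ℂ)⁻¹ * ∑ u, star (e u) ⬝ᵥ (A m).mulVec (e u))
      = ((D:ℝ) * (D:ℝ))⁻¹ * Fe' := by
    rw [hFe', Finset.mul_sum]
    refine Finset.sum_congr rfl fun m _ => ?_
    rw [Complex.normSq_mul, Complex.normSq_inv, Complex.normSq_natCast]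
  rw [hgoal]
  rcases Nat.lt_or_ge D 2 with hD2 | hD2
  · -- D = 1
    have hD1 : D = 1 := by omega
    subst hD1
    have hFe1 : Fe' = ∑ m, Complex.normSq (star (e 0) ⬝ᵥ (A m).mulVec (e 0)) := by
      rw [hFe']
      exact Finset.sum_congr rfl fun m _ => by rw [Fin.sum_univ_one]
    have h1 : s ≤ Fe' := by rw [hFe1]; exact hse 0
    norm_num
    linarith
  · -- D ≥ 2
    have hDR2 : (2:ℝ) ≤ (D:ℝ) := by exact_mod_cast hD2
    have hDD : (0:ℝ) < (D:ℝ) * (D:ℝ) := by positivity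
    rw [show (1 : ℝ) - ((D:ℝ) * (D:ℝ))⁻¹ * Fe'
        = (((D:ℝ) * (D:ℝ)) - Fe') / ((D:ℝ) * (D:ℝ)) by field_simp, div_le_iff₀ hDD]
    nlinarith [hkey, hRD, hTD, hs1, hDR2, hDR,
      mul_nonneg (mul_nonneg (sub_nonneg.2 hs1) (sub_nonneg.2 hDR2)) hDR.le]
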